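/- There exists an absolute constant c > 0 such that for every prime power q and all nonempty subsets A₁, A₂, A₃ ⊆ F_q^*, one has max(|(A₁ + 1)·A₂|, |A₁·A₃|) ≥ c · min(√(|A₁|·q), √(|A₁|²·|A₂|·|A₃|/q)), where A₁ + 1 = {a + 1 : a ∈ A₁}. -/

import Mathlib

open scoped Pointwise
open Finset

set_option maxHeartbeats 1000000

section GaraevShenAux

variable {F : Type} [Field F] [Fintype F] [DecidableEq F]

/-- Number of points of `Y ×ˢ W` on the line `w = m·y + b`, where `p = (m, b)`. -/
private def gsNu (Y W : Finset F) (p : F × F) : ℕ :=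
  ((Y ×ˢ W).filter (fun t => t.2 = p.1 * t.1 + p.2)).card

private lemma gsNu_sum (Y W : Finset F) :
    ∑ p : F × F, gsNu Y W p = (Y.card * W.card) * Fintype.card F := by
  simp only [gsNu, card_filter]
  rw [Finset.sum_comm]
  have h : ∀ t : F × F, t ∈ Y ×ˢ W →
      (∑ p : F × F, if t.2 = p.1 * t.1 + p.2 then (1:ℕ) else 0) = Fintype.card F := by
    intro t _
    rw [Fintype.sum_prod_type]
    have h1 : ∀ m : F, (∑ b : F, if t.2 = m * t.1 + b then (1:ℕ) else 0) = 1 := by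
      intro m
      have e : ∀ b : F, (t.2 = m * t.1 + b) = (b = t.2 - m * t.1) := by
        intro b
        apply propext
        constructor <;> intro h
        · rw [h]; ring
        · rw [h]; ring
      simp only [e]
      rw [Finset.sum_ite_eq' Finset.univ (t.2 - m * t.1) (fun _ => (1:ℕ))]
      simp
    simp only [h1]
    simp [Finset.card_univ]
  rw [Finset.sum_congr rfl h, Finset.sum_const, Finset.card_product]
  simp [mul_comm]

private lemma gsNu_sq_sum (Y W : Finset F) :
    ∑ p : F × F, (gsNu Y W p)^2
      ≤ (Y.card * W.card) * (Fintype.card F + Y.card * W.card) := by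
  have key : ∀ p : F × F, (gsNu Y W p)^2 =
      ∑ t ∈ Y ×ˢ W, ∑ t' ∈ Y ×ˢ W,
        if (t.2 = p.1 * t.1 + p.2) ∧ (t'.2 = p.1 * t'.1 + p.2) then (1:ℕ) else 0 := by
    intro p
    rw [sq, gsNu, card_filter, Finset.sum_mul_sum]
    apply Finset.sum_congr rfl; intro t _
    apply Finset.sum_congr rfl; intro t' _
    by_cases h1 : t.2 = p.1 * t.1 + p.2 <;> by_cases h2 : t'.2 = p.1 * t'.1 + p.2 <;>
      simp [h1, h2]
  simp only [key]
  rw [Finset.sum_comm]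
  rw [Finset.sum_congr rfl (fun t _ => Finset.sum_comm)]
  have cnt : ∀ t t' : F × F, t ∈ Y ×ˢ W → (∑ p : F × F,
        if (t.2 = p.1 * t.1 + p.2) ∧ (t'.2 = p.1 * t'.1 + p.2) then (1:ℕ) else 0)
      ≤ if t = t' then Fintype.card F else 1 := by
    intro t t' _
    rw [← card_filter]
    by_cases he : t = t'
    · simp only [he, if_pos rfl]
      subst he
      calc ((univ : Finset (F × F)).filter
            (fun p => (t.2 = p.1 * t.1 + p.2) ∧ (t.2 = p.1 * t.1 + p.2))).card
          ≤ (univ : Finset F).card := by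
            apply Finset.card_le_card_of_injOn (fun p => p.1)
            · intro p _; exact mem_univ _
            · intro p hp p' hp' hpp
              simp only [mem_coe, mem_filter] at hp hp'
              have hpp' : p.1 = p'.1 := hpp
              have h1 : p.2 = t.2 - p.1 * t.1 := by rw [hp.2.1]; ring
              have h2 : p'.2 = t.2 - p'.1 * t.1 := by rw [hp'.2.1]; ring
              exact Prod.ext hpp' (by rw [h1, h2, hpp'])
        _ = Fintype.card F := card_univ
    · simp only [if_neg he]
      apply Finset.card_le_one.mpr
      intro p hp p' hp'
      simp only [mem_filter] at hp hp'
      obtain ⟨-, hA, hB⟩ := hp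
      obtain ⟨-, hA', hB'⟩ := hp'
      have dp : p.1 * (t'.1 - t.1) = t'.2 - t.2 := by linear_combination hA - hB
      have dp' : p'.1 * (t'.1 - t.1) = t'.2 - t.2 := by linear_combination hA' - hB'
      by_cases hx : t'.1 - t.1 = 0
      · exfalso
        have h1 : t.1 = t'.1 := (sub_eq_zero.mp hx).symm
        have h2 : t.2 = t'.2 := by
          rw [hx, mul_zero] at dp
          exact (sub_eq_zero.mp dp.symm).symm
        exact he (Prod.ext h1 h2)
      · have h1 : p.1 = p'.1 := mul_right_cancel₀ hx (dp.trans dp'.symm)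
        have h2 : p.2 = p'.2 := by
          have e1 : p.2 = t.2 - p.1 * t.1 := by rw [hA]; ring
          have e2 : p'.2 = t.2 - p'.1 * t.1 := by rw [hA']; ring
          rw [e1, e2, h1]
        exact Prod.ext h1 h2
  calc ∑ t ∈ Y ×ˢ W, ∑ t' ∈ Y ×ˢ W, (∑ p : F × F,
        if (t.2 = p.1 * t.1 + p.2) ∧ (t'.2 = p.1 * t'.1 + p.2) then (1:ℕ) else 0)
      ≤ ∑ t ∈ Y ×ˢ W, ∑ t' ∈ Y ×ˢ W, (if t = t' then Fintype.card F else 1) := by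
        apply Finset.sum_le_sum; intro t ht
        apply Finset.sum_le_sum; intro t' _
        exact cnt t t' ht
    _ ≤ ∑ t ∈ Y ×ˢ W, (Fintype.card F + (Y ×ˢ W).card) := by
        apply Finset.sum_le_sum; intro t _
        calc ∑ t' ∈ Y ×ˢ W, (if t = t' then Fintype.card F else 1)
            ≤ ∑ t' ∈ Y ×ˢ W, ((if t' = t then Fintype.card F else 0) + 1) := by
              apply Finset.sum_le_sum; intro t' _
              by_cases h : t = t'
              · simp [h]
              · simp [h, Ne.symm h]
          _ = (if t ∈ Y ×ˢ W then Fintype.card F else 0) + (Y ×ˢ W).card := by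
              rw [Finset.sum_add_distrib, Finset.sum_ite_eq' (Y ×ˢ W) t]
              simp
          _ ≤ Fintype.card F + (Y ×ˢ W).card := by
              split <;> simp
    _ = (Y.card * W.card) * (Fintype.card F + Y.card * W.card) := by
        rw [Finset.sum_const, Finset.card_product, smul_eq_mul]

private lemma gsNu_var (Y W : Finset F) :
    ∑ p : F × F, ((gsNu Y W p : ℝ) - (Y.card * W.card : ℝ) / (Fintype.card F)) ^ 2
      ≤ (Fintype.card F : ℝ) * (Y.card * W.card) := by
  set q : ℝ := (Fintype.card F : ℝ) with hq
  set K : ℝ := ((Y.card : ℝ) * (W.card : ℝ)) with hK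
  have hq0 : 0 < q := by
    simp only [hq, Nat.cast_pos]
    exact Fintype.card_pos
  have hs1 : ∑ p : F × F, (gsNu Y W p : ℝ) = K * q := by
    rw [← Nat.cast_sum]
    rw [gsNu_sum]
    push_cast [hK]
    ring
  have hs2 : ∑ p : F × F, ((gsNu Y W p : ℝ))^2 ≤ K * (q + K) := by
    have := gsNu_sq_sum Y W
    calc ∑ p : F × F, ((gsNu Y W p : ℝ))^2
        = ((∑ p : F × F, (gsNu Y W p)^2 : ℕ) : ℝ) := by push_cast; rfl
      _ ≤ (((Y.card * W.card) * (Fintype.card F + Y.card * W.card) : ℕ) : ℝ) := by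
          exact_mod_cast this
      _ = K * (q + K) := by push_cast [hK, hq]; ring
  have expand : ∀ p : F × F, ((gsNu Y W p : ℝ) - K / q) ^ 2
      = ((gsNu Y W p : ℝ))^2 - (2 * (K / q)) * (gsNu Y W p : ℝ) + (K/q)^2 := by
    intro p; ring
  rw [Finset.sum_congr rfl (fun p _ => expand p)]
  rw [Finset.sum_add_distrib, Finset.sum_sub_distrib, ← Finset.mul_sum, hs1,
    Finset.sum_const, Finset.card_univ, Fintype.card_prod, nsmul_eq_mul]
  have e1 : ((Fintype.card F * Fintype.card F : ℕ) : ℝ) = q * q := by push_cast [hq]; ring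
  rw [e1]
  have e2 : 2 * (K / q) * (K * q) = 2 * K^2 := by field_simp
  have e3 : (q * q) * (K/q)^2 = K^2 := by field_simp
  calc ∑ p : F × F, ((gsNu Y W p:ℝ))^2 - 2 * (K / q) * (K * q) + (q*q) * (K/q)^2
      ≤ K * (q + K) - 2*K^2 + K^2 := by rw [e2, e3]; linarith [hs2]
    _ ≤ q * K := by ring_nf; nlinarith [hs2]

/-- Vinh-type bound on solutions of `x*y - z*w = 1`. -/
private lemma gs_line_count (X Y Z W : Finset F) (hZ : (0:F) ∉ Z) :
    (((((X ×ˢ Z) ×ˢ (Y ×ˢ W)).filter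
        (fun p : (F × F) × F × F => p.1.1 * p.2.1 - p.1.2 * p.2.2 = 1)).card : ℝ))
      ≤ (X.card * Z.card) * (Y.card * W.card) / (Fintype.card F)
        + Real.sqrt ((Fintype.card F) * ((X.card * Z.card) * (Y.card * W.card))) := by
  classical
  set q : ℝ := (Fintype.card F : ℝ) with hqdef
  have hq0 : 0 < q := by simp only [hqdef, Nat.cast_pos]; exact Fintype.card_pos
  set K : ℝ := ((Y.card : ℝ) * (W.card : ℝ)) with hK
  set μ : ℝ := K / q with hμ
  -- the line map
  set φ : F × F → F × F := fun u => (u.1 * u.2⁻¹, -u.2⁻¹) with hφ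
  have hmem : ∀ u ∈ X ×ˢ Z, u.2 ≠ 0 := by
    intro u hu h0
    exact hZ (h0 ▸ (mem_product.mp hu).2)
  -- step 1: the cardinality as a sum of gsNu over lines
  have step1 : (((X ×ˢ Z) ×ˢ (Y ×ˢ W)).filter
        (fun p : (F × F) × F × F => p.1.1 * p.2.1 - p.1.2 * p.2.2 = 1)).card
      = ∑ u ∈ X ×ˢ Z, gsNu Y W (φ u) := by
    rw [card_filter, Finset.sum_product]
    apply Finset.sum_congr rfl
    intro u hu
    have hu2 : u.2 ≠ 0 := hmem u hu
    rw [← card_filter, gsNu]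
    congr 1
    apply Finset.filter_congr
    intro t _
    simp only [hφ]
    constructor
    · intro h
      field_simp
      linear_combination -h
    · intro h
      field_simp at h
      linear_combination -h
  -- step 2: rewrite as a sum over the image
  have hinj : Set.InjOn φ (X ×ˢ Z : Finset (F × F)) := by
    intro u hu v hv huv
    simp only [mem_coe] at hu hv
    have hu2 := hmem u hu
    have hv2 := hmem v hv
    have h2 : u.2⁻¹ = v.2⁻¹ := by
      have := congrArg Prod.snd huv
      simpa [hφ] using this
    have h2' : u.2 = v.2 := inv_injective h2
    have h1 : u.1 * u.2⁻¹ = v.1 * v.2⁻¹ := congrArg Prod.fst huv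
    rw [← h2'] at h1
    have h1' : u.1 = v.1 := mul_right_cancel₀ (inv_ne_zero hu2) h1
    exact Prod.ext h1' h2'
  set L : Finset (F × F) := (X ×ˢ Z).image φ with hL
  have hLcard : (L.card : ℝ) = (X.card : ℝ) * (Z.card : ℝ) := by
    rw [hL, Finset.card_image_of_injOn hinj, Finset.card_product]
    push_cast; ring
  have step2 : ∑ u ∈ X ×ˢ Z, gsNu Y W (φ u) = ∑ p ∈ L, gsNu Y W p :=
    (Finset.sum_image (fun u hu v hv h => hinj hu hv h)).symm
  -- step 3: Cauchy–Schwarz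
  have hvar : ∑ p ∈ L, ((gsNu Y W p : ℝ) - μ) ^ 2 ≤ q * K := by
    calc ∑ p ∈ L, ((gsNu Y W p : ℝ) - μ) ^ 2
        ≤ ∑ p : F × F, ((gsNu Y W p : ℝ) - μ) ^ 2 := by
          apply Finset.sum_le_sum_of_subset_of_nonneg (Finset.subset_univ L)
          intro p _ _; positivity
      _ ≤ q * K := by
          rw [hμ, hK]
          exact gsNu_var Y W
  have cs : ∑ p ∈ L, ((gsNu Y W p : ℝ) - μ)
      ≤ Real.sqrt ((L.card : ℝ) * (q * K)) := by
    have h1 : (∑ p ∈ L, ((gsNu Y W p : ℝ) - μ)) ^ 2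
        ≤ (L.card : ℝ) * ∑ p ∈ L, ((gsNu Y W p : ℝ) - μ) ^ 2 :=
      sq_sum_le_card_mul_sum_sq
    have h2 : (∑ p ∈ L, ((gsNu Y W p : ℝ) - μ)) ^ 2 ≤ (L.card : ℝ) * (q * K) := by
      calc (∑ p ∈ L, ((gsNu Y W p : ℝ) - μ)) ^ 2
          ≤ (L.card : ℝ) * ∑ p ∈ L, ((gsNu Y W p : ℝ) - μ) ^ 2 := h1
        _ ≤ (L.card : ℝ) * (q * K) := by
            apply mul_le_mul_of_nonneg_left hvar (Nat.cast_nonneg _)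
    calc ∑ p ∈ L, ((gsNu Y W p : ℝ) - μ)
        ≤ |∑ p ∈ L, ((gsNu Y W p : ℝ) - μ)| := le_abs_self _
      _ = Real.sqrt ((∑ p ∈ L, ((gsNu Y W p : ℝ) - μ))^2) := (Real.sqrt_sq_eq_abs _).symm
      _ ≤ Real.sqrt ((L.card : ℝ) * (q * K)) := Real.sqrt_le_sqrt h2
  -- combine
  have final : (∑ p ∈ L, (gsNu Y W p : ℝ))
      ≤ (X.card * Z.card) * K / q + Real.sqrt (q * ((X.card * Z.card) * K)) := by
    have e : ∑ p ∈ L, (gsNu Y W p : ℝ)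
        = (∑ p ∈ L, ((gsNu Y W p : ℝ) - μ)) + (L.card : ℝ) * μ := by
      rw [Finset.sum_sub_distrib, Finset.sum_const, nsmul_eq_mul]
      ring
    rw [e, hLcard]
    have e2 : (X.card : ℝ) * (Z.card : ℝ) * μ = (X.card * Z.card) * K / q := by
      rw [hμ]; ring
    have e3 : ((X.card : ℝ) * Z.card) * (q * K) = q * ((X.card * Z.card) * K) := by ring
    calc (∑ p ∈ L, ((gsNu Y W p : ℝ) - μ)) + (X.card : ℝ) * (Z.card : ℝ) * μ
        ≤ Real.sqrt (((X.card : ℝ) * Z.card) * (q * K)) + (X.card * Z.card) * K / q := by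
          rw [e2] at *
          have := cs
          rw [hLcard] at this
          linarith
      _ = (X.card * Z.card) * K / q + Real.sqrt (q * ((X.card * Z.card) * K)) := by
          rw [e3]; ring
  calc (((((X ×ˢ Z) ×ˢ (Y ×ˢ W)).filter
        (fun p : (F × F) × F × F => p.1.1 * p.2.1 - p.1.2 * p.2.2 = 1)).card : ℝ))
      = ∑ p ∈ L, (gsNu Y W p : ℝ) := by
        rw [step1, step2] at *
        push_cast
        rfl
    _ ≤ (X.card * Z.card) * K / q + Real.sqrt (q * ((X.card * Z.card) * K)) := final
    _ = (X.card * Z.card) * (Y.card * W.card) / (Fintype.card F)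
        + Real.sqrt ((Fintype.card F) * ((X.card * Z.card) * (Y.card * W.card))) := by
        rw [hK, hqdef]

-- lower bound on solution count
private lemma gs_lower (A₁ A₂ A₃ : Finset F)
    (h1 : (0:F) ∉ A₁) (h2 : (0:F) ∉ A₂) (h3 : (0:F) ∉ A₃) :
    (A₁.card - 1) * (A₂.card * A₃.card)
      ≤ (Finset.filter
          (fun p : (F × F) × F × F => p.1.1 * p.2.1 - p.1.2 * p.2.2 = 1)
          (((A₁.image (· + 1) * A₂) ×ˢ (A₁ * A₃)) ×ˢ
            ((A₂.image (·⁻¹)) ×ˢ (A₃.image (·⁻¹))))).card := by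
  classical
  set A₁' := A₁.erase (-1) with hA₁'
  have hcard : (A₁.card - 1) * (A₂.card * A₃.card) ≤ ((A₁' ×ˢ (A₂ ×ˢ A₃)).card) := by
    rw [Finset.card_product, Finset.card_product]
    exact Nat.mul_le_mul_right _ (Finset.pred_card_le_card_erase)
  refine hcard.trans ?_
  apply Finset.card_le_card_of_injOn
    (fun t => (((t.1 + 1) * t.2.1, t.1 * t.2.2), ((t.2.1)⁻¹, (t.2.2)⁻¹)))
  · rintro ⟨a, b, c⟩ ht
    simp only [mem_coe, mem_product] at ht
    obtain ⟨ha', hb, hc⟩ := ht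
    have ha : a ∈ A₁ := Finset.mem_of_mem_erase ha'
    have hane : a ≠ -1 := Finset.ne_of_mem_erase ha'
    have hb0 : b ≠ 0 := fun h => h2 (h ▸ hb)
    have hc0 : c ≠ 0 := fun h => h3 (h ▸ hc)
    rw [mem_coe, mem_filter, mem_product, mem_product, mem_product]
    refine ⟨⟨⟨?_, ?_⟩, ?_, ?_⟩, ?_⟩
    · exact Finset.mul_mem_mul (Finset.mem_image_of_mem _ ha) hb
    · exact Finset.mul_mem_mul ha hc
    · exact Finset.mem_image_of_mem _ hb
    · exact Finset.mem_image_of_mem _ hc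
    · show (a + 1) * b * b⁻¹ - a * c * c⁻¹ = 1
      field_simp; ring
  · rintro ⟨a, b, c⟩ ht ⟨a', b', c'⟩ ht' heq
    simp only [mem_coe, mem_product] at ht ht'
    obtain ⟨ha1, hb, hc⟩ := ht
    obtain ⟨ha1', hb', hc'⟩ := ht'
    have hc0 : c ≠ 0 := fun h => h3 (h ▸ hc)
    simp only [Prod.mk.injEq] at heq
    obtain ⟨⟨e1, e2⟩, e3, e4⟩ := heq
    have hbb : b = b' := inv_injective e3
    have hcc : c = c' := inv_injective e4
    have haa : a = a' := by
      rw [← hcc] at e2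
      exact mul_right_cancel₀ hc0 e2
    simp [haa, hbb, hcc]

end GaraevShenAux

/-- **Garaev–Shen.** There is an absolute `c > 0` such that for every
finite field `F_q` and nonempty `A₁, A₂, A₃ ⊆ F_q^*`,
`max(|(A₁+1)·A₂|, |A₁·A₃|) ≥ c·min(√(|A₁|q), √(|A₁|²|A₂||A₃|/q))`. -/
theorem sum_product_garaev_shen :
    ∃ c : ℝ, 0 < c ∧
      ∀ (F : Type) [Field F] [Fintype F] [DecidableEq F] (A₁ A₂ A₃ : Finset F),
        A₁.Nonempty → A₂.Nonempty → A₃.Nonempty →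
        (0 : F) ∉ A₁ → (0 : F) ∉ A₂ → (0 : F) ∉ A₃ →
        c * min (Real.sqrt ((A₁.card : ℝ) * (Fintype.card F : ℝ)))
            (Real.sqrt ((A₁.card : ℝ) ^ 2 * (A₂.card : ℝ) * (A₃.card : ℝ)
              / (Fintype.card F : ℝ)))
          ≤ max (((A₁.image (· + 1) * A₂).card : ℝ)) (((A₁ * A₃).card : ℝ)) := by
  refine ⟨1/4, by norm_num, ?_⟩
  intro F _ _ _ A₁ A₂ A₃ hne1 hne2 hne3 h1 h2 h3
  classical
  set a : ℝ := (A₁.card : ℝ) with ha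
  set b : ℝ := (A₂.card : ℝ) with hb
  set c : ℝ := (A₃.card : ℝ) with hc
  set q : ℝ := (Fintype.card F : ℝ) with hq
  set r : ℝ := ((A₁.image (· + 1) * A₂).card : ℝ) with hr
  set s : ℝ := ((A₁ * A₃).card : ℝ) with hs
  have hq0 : 0 < q := by simp only [hq, Nat.cast_pos]; exact Fintype.card_pos
  have ha1 : 1 ≤ a := by simp only [ha]; exact_mod_cast hne1.card_pos
  have hb1 : 1 ≤ b := by simp only [hb]; exact_mod_cast hne2.card_pos
  have hc1 : 1 ≤ c := by simp only [hc]; exact_mod_cast hne3.card_pos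
  have hr0 : 0 ≤ r := by simp only [hr]; positivity
  have hs0 : 0 ≤ s := by simp only [hs]; positivity
  have hbq : b ≤ q := by
    simp only [hb, hq]
    exact_mod_cast (Finset.card_le_univ A₂).trans_eq (Finset.card_univ)
  -- the min is nonnegative
  have hmin0 : 0 ≤ min (Real.sqrt (a * q)) (Real.sqrt (a^2 * b * c / q)) :=
    le_min (Real.sqrt_nonneg _) (Real.sqrt_nonneg _)
  rcases eq_or_lt_of_le ha1 with hA1 | hA2
  · -- |A₁| = 1 : trivial bound via |A₁ * A₃| ≥ |A₃|
    have hA1' : A₁.card = 1 := by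
      have : (A₁.card : ℝ) = 1 := by rw [← ha]; exact hA1.symm
      exact_mod_cast this
    obtain ⟨a₀, ha₀⟩ := Finset.card_eq_one.mp hA1'
    have ha₀0 : a₀ ≠ 0 := fun h => h1 (by rw [ha₀, h]; exact Finset.mem_singleton_self 0)
    have hsc : c ≤ s := by
      simp only [hs, hc, ha₀]
      have : ({a₀} * A₃ : Finset F).card = A₃.card := by
        rw [Finset.singleton_mul]
        exact Finset.card_image_of_injective _ (MulAction.injective₀ ha₀0)
      exact_mod_cast this.ge
    have key : min (Real.sqrt (a * q)) (Real.sqrt (a^2 * b * c / q)) ≤ s := by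
      refine (min_le_right _ _).trans ?_
      have e1 : a^2 * b * c / q ≤ c := by
        rw [← hA1]
        rw [div_le_iff₀ hq0]
        nlinarith
      have hsc1 : (1:ℝ) ≤ Real.sqrt c := by
        rw [show (1:ℝ) = Real.sqrt 1 by simp]
        exact Real.sqrt_le_sqrt hc1
      calc Real.sqrt (a^2 * b * c / q) ≤ Real.sqrt c := Real.sqrt_le_sqrt e1
        _ ≤ c := by
            nlinarith [Real.sq_sqrt (by linarith : (0:ℝ) ≤ c), Real.sqrt_nonneg c]
        _ ≤ s := hsc
    calc (1/4) * min (Real.sqrt (a * q)) (Real.sqrt (a^2 * b * c / q))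
        ≤ min (Real.sqrt (a * q)) (Real.sqrt (a^2 * b * c / q)) := by linarith
      _ ≤ s := key
      _ ≤ max r s := le_max_right _ _
  · -- |A₁| ≥ 2 : main case
    have ha2 : 2 ≤ a := by
      have h' : (1:ℝ) < (A₁.card : ℝ) := by rw [← ha]; exact hA2
      have h'' : 2 ≤ A₁.card := by exact_mod_cast h'
      rw [ha]; exact_mod_cast h''
    have hbc0 : 0 < b * c := by nlinarith
    -- counting chain
    have hQ0 : (0:F) ∉ A₁ * A₃ := by
      intro h
      obtain ⟨x, hx, y, hy, hxy⟩ := Finset.mem_mul.mp h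
      rcases mul_eq_zero.mp hxy with h | h
      · exact h1 (h ▸ hx)
      · exact h3 (h ▸ hy)
    have hlow : (a - 1) * (b * c) ≤ r * s * (b * c) / q
        + Real.sqrt (q * (r * s * (b * c))) := by
      have hYcard : ((A₂.image (·⁻¹)).card : ℝ) = b := by
        simp only [hb]
        exact_mod_cast Finset.card_image_of_injective _ inv_injective
      have hWcard : ((A₃.image (·⁻¹)).card : ℝ) = c := by
        simp only [hc]
        exact_mod_cast Finset.card_image_of_injective _ inv_injective
      have h₁ := gs_lower A₁ A₂ A₃ h1 h2 h3
      have h₂ := gs_line_count (A₁.image (· + 1) * A₂) (A₂.image (·⁻¹))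
        (A₁ * A₃) (A₃.image (·⁻¹)) hQ0
      rw [hYcard, hWcard] at h₂
      have hn1 : 1 ≤ A₁.card := hne1.card_pos
      have hcast : (((A₁.card - 1) * (A₂.card * A₃.card) : ℕ) : ℝ) = (a - 1) * (b * c) := by
        push_cast [hn1]
        rw [ha, hb, hc]
      calc (a - 1) * (b * c)
          = (((A₁.card - 1) * (A₂.card * A₃.card) : ℕ) : ℝ) := hcast.symm
        _ ≤ _ := Nat.cast_le.mpr h₁
        _ ≤ r * s * (b * c) / q + Real.sqrt (q * (r * s * (b * c))) := by
            convert h₂ using 3 <;> rw [hr, hs, hq] <;> ring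
    clear hr hs ha hb hc hq
    clear_value a b c q r s
    -- clean numeric part
    have hlow' : (a - 1) * (b * c) * q ≤ r * s * (b * c)
        + Real.sqrt (q * (r * s * (b * c))) * q := by
      have := mul_le_mul_of_nonneg_right hlow (le_of_lt hq0)
      calc (a - 1) * (b * c) * q
          ≤ (r * s * (b * c) / q + Real.sqrt (q * (r * s * (b * c)))) * q := this
        _ = r * s * (b * c) + Real.sqrt (q * (r * s * (b * c))) * q := by
            field_simp
    have M16 : min (a * q) (a^2 * b * c / q) ≤ 16 * (r * s) := by
      rcases le_or_gt (a * q) (16 * (r * s)) with hcase | hcase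
      · exact (min_le_left _ _).trans hcase
      · -- hard case
        have hrs_bc : r * s * (b * c) ≤ (a * q) * (b * c) / 16 := by
          nlinarith [mul_le_mul_of_nonneg_right (le_of_lt hcase) (le_of_lt hbc0)]
        have hsqrtq : (a/4) * (b * c) * q ≤ Real.sqrt (q * (r * s * (b * c))) * q := by
          have hx : 0 ≤ (b*c) * q * ((11/16)*a - 1) :=
            mul_nonneg (mul_nonneg (le_of_lt hbc0) (le_of_lt hq0)) (by linarith)
          nlinarith [hx]
        have h4 : (a/4) * (b * c) ≤ Real.sqrt (q * (r * s * (b * c))) :=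
          le_of_mul_le_mul_right hsqrtq hq0
        have hE : (0:ℝ) ≤ q * (r * s * (b * c)) := by positivity
        have hsq : ((a/4) * (b * c))^2 ≤ q * (r * s * (b * c)) := by
          have := pow_le_pow_left₀ (by positivity : (0:ℝ) ≤ (a/4) * (b * c)) h4 2
          rwa [Real.sq_sqrt hE] at this
        have habc : a^2 * (b * c) ≤ 16 * (q * (r * s)) := by
          have h' : a^2 * (b*c) * (b*c) ≤ 16 * (q * (r * s)) * (b*c) := by nlinarith
          exact le_of_mul_le_mul_right h' hbc0
        have : a^2 * b * c / q ≤ 16 * (r * s) := by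
          rw [div_le_iff₀ hq0]
          nlinarith
        exact (min_le_right _ _).trans this
    -- conclude
    have hM0 : 0 ≤ min (a * q) (a^2 * b * c / q) := by
      apply le_min <;> positivity
    have hminsqrt : min (Real.sqrt (a * q)) (Real.sqrt (a^2 * b * c / q))
        = Real.sqrt (min (a * q) (a^2 * b * c / q)) := by
      rcases le_total (a * q) (a^2 * b * c / q) with h | h
      · rw [min_eq_left h, min_eq_left (Real.sqrt_le_sqrt h)]
      · rw [min_eq_right h, min_eq_right (Real.sqrt_le_sqrt h)]
    rw [hminsqrt]
    have hmax : Real.sqrt (r * s) ≤ max r s := by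
      have h' : r * s ≤ (max r s) * (max r s) :=
        mul_le_mul (le_max_left _ _) (le_max_right _ _) hs0 (le_trans hr0 (le_max_left _ _))
      calc Real.sqrt (r * s) ≤ Real.sqrt ((max r s) * (max r s)) := Real.sqrt_le_sqrt h'
        _ = max r s := Real.sqrt_mul_self (le_trans hr0 (le_max_left _ _))
    calc (1/4) * Real.sqrt (min (a * q) (a^2 * b * c / q))
        = Real.sqrt (min (a * q) (a^2 * b * c / q) / 16) := by
          rw [show min (a * q) (a^2 * b * c / q) / 16
              = min (a * q) (a^2 * b * c / q) * (1/16) by ring,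
            Real.sqrt_mul hM0, show (1/16 : ℝ) = (1/4)^2 by norm_num,
            Real.sqrt_sq (by norm_num : (0:ℝ) ≤ 1/4)]
          ring
      _ ≤ Real.sqrt (r * s) := Real.sqrt_le_sqrt (by linarith)
      _ ≤ max r s := hmax
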